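/- Let p > 1 and X = ℓ_p. The set of all T ∈ 𝒫₁(X) having no non-trivial closed invariant ideal (i.e. no closed ideal V of ℓ_p with {0} ≠ V ≠ ℓ_p and T(V) ⊆ V) is comeager in (𝒫₁(X), WOT) and comeager in (𝒫₁(X), SOT_*). -/

import Mathlib

open scoped ENNReal

noncomputable section

/-- The sequence space `ℓ_p` over `ℂ`. -/
abbrev LpSeq (p : ℝ≥0∞) := lp (fun _ : ℕ => ℂ) p

/-- A vector of `ℓ_p` is positive if all its coordinates are nonnegative reals. -/
def PosVec {p : ℝ≥0∞} (x : lp (fun _ : ℕ => ℂ) p) : Prop :=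
  ∀ n : ℕ, 0 ≤ (x n).re ∧ (x n).im = 0

/-- The set `𝒫₁(ℓ_p)` of positive contractions on `ℓ_p`. -/
def P1 (p : ℝ≥0∞) [Fact (1 ≤ p)] : Set (LpSeq p →L[ℂ] LpSeq p) :=
  {T | (∀ x : LpSeq p, PosVec x → PosVec (T x)) ∧ ‖T‖ ≤ 1}

/-- The strong operator topology (pointwise norm-convergence) on operators of `ℓ_p`. -/
def sotOp (p : ℝ≥0∞) [Fact (1 ≤ p)] : TopologicalSpace (LpSeq p →L[ℂ] LpSeq p) :=
  TopologicalSpace.induced (fun T => (fun x : LpSeq p => T x)) Pi.topologicalSpace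

/-- The weak operator topology on operators of `ℓ_p`. -/
def wotOp (p : ℝ≥0∞) [Fact (1 ≤ p)] : TopologicalSpace (LpSeq p →L[ℂ] LpSeq p) :=
  TopologicalSpace.induced
    (fun T => (fun q : LpSeq p × StrongDual ℂ (LpSeq p) => q.2 (T q.1)))
    Pi.topologicalSpace

/-- The dual strong operator topology `SOT_*` (pointwise norm-convergence of the adjoints,
acting on the dual space). -/
def sotStarDualOp (p : ℝ≥0∞) [Fact (1 ≤ p)] : TopologicalSpace (LpSeq p →L[ℂ] LpSeq p) :=
  TopologicalSpace.induced
    (fun T => (fun y : StrongDual ℂ (LpSeq p) => y.comp T))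
    Pi.topologicalSpace

/-- The `SOT*` topology, the join of `SOT` and `SOT_*` (pointwise norm-convergence of the
operators and of their adjoints).  Recall that in the order on `TopologicalSpace`,
`⊓` is the join (the coarsest topology refining both). -/
def sotSStarDualOp (p : ℝ≥0∞) [Fact (1 ≤ p)] : TopologicalSpace (LpSeq p →L[ℂ] LpSeq p) :=
  sotOp p ⊓ sotStarDualOp p

/-- Restriction of a topology to a subset. -/
def rtop {α : Type*} (s : Set α) (t : TopologicalSpace α) : TopologicalSpace ↥s :=
  t.induced Subtype.val

/-- A submodule `V` of `ℓ_p` is an ideal if whenever `|x| ≤ |y|` coordinatewise and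
`y ∈ V`, one has `x ∈ V`. -/
def IsIdealLp {p : ℝ≥0∞} [Fact (1 ≤ p)] (V : Submodule ℂ (LpSeq p)) : Prop :=
  ∀ x y : LpSeq p, (∀ n : ℕ, ‖x n‖ ≤ ‖y n‖) → y ∈ V → x ∈ V


namespace NoIdealAux

open Filter

variable {p : ℝ≥0∞} [Fact (1 ≤ p)]

lemma pNeZero : p ≠ 0 := (lt_of_lt_of_le zero_lt_one Fact.out).ne'

/-- coordinate functional on `ℓ_p`. -/
def coordCLM (p : ℝ≥0∞) [Fact (1 ≤ p)] (j : ℕ) : LpSeq p →L[ℂ] ℂ :=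
  LinearMap.mkContinuous
    { toFun := fun x => x j
      map_add' := fun x y => by simp [lp.coeFn_add]
      map_smul' := fun c x => by simp [lp.coeFn_smul] }
    1 (fun x => by rw [one_mul]; exact lp.norm_apply_le_norm pNeZero x j)

lemma coordCLM_apply (j : ℕ) (x : LpSeq p) : coordCLM p j x = x j := rfl

lemma posVec_single (i : ℕ) : PosVec (lp.single p i (1:ℂ)) := by
  intro n
  by_cases h : n = i
  · subst h; rw [lp.single_apply_self]; norm_num
  · rw [lp.single_apply_ne p i _ h]; norm_num

lemma norm_single_one (hp' : p ≠ ⊤) (i : ℕ) : ‖(lp.single p i (1:ℂ) : LpSeq p)‖ = 1 := by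
  have h := lp.norm_single (E := fun _ : ℕ => ℂ)
    (pos_iff_ne_zero.mpr (pNeZero (p := p))) i (1:ℂ)
  simpa using h

/-- rank one positive contraction `x ↦ x i • e_j`. -/
def rankOne (p : ℝ≥0∞) [Fact (1 ≤ p)] (i j : ℕ) : LpSeq p →L[ℂ] LpSeq p :=
  (coordCLM p i).smulRight (lp.single p j 1)

lemma rankOne_apply (i j : ℕ) (x : LpSeq p) :
    rankOne p i j x = x i • (lp.single p j 1 : LpSeq p) := rfl

lemma rankOne_coord (i j n : ℕ) (x : LpSeq p) :
    (rankOne p i j x) n = x i * ((lp.single p j 1 : LpSeq p) n) := by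
  rw [rankOne_apply, lp.coeFn_smul, Pi.smul_apply, smul_eq_mul]

lemma rankOne_mem_P1 (hp' : p ≠ ⊤) (i j : ℕ) : rankOne p i j ∈ P1 p := by
  constructor
  · intro x hx n
    rw [rankOne_coord]
    by_cases h : n = j
    · subst h; rw [lp.single_apply_self, mul_one]; exact hx i
    · rw [lp.single_apply_ne p j _ h, mul_zero]; norm_num
  · rw [rankOne, ContinuousLinearMap.norm_smulRight_apply, norm_single_one hp', mul_one]
    exact LinearMap.mkContinuous_norm_le _ zero_le_one _

lemma single_mem_of_mem {V : Submodule ℂ (LpSeq p)} (hV : IsIdealLp V)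
    {y : LpSeq p} (hy : y ∈ V) {i : ℕ} (hyi : y i ≠ 0) : lp.single p i 1 ∈ V := by
  have h1 : lp.single p i (y i) ∈ V := by
    refine hV _ y (fun n => ?_) hy
    by_cases h : n = i
    · subst h; rw [lp.single_apply_self]
    · rw [lp.single_apply_ne p i _ h]; simp
  have h2 : ((y i)⁻¹ : ℂ) • (lp.single p i (y i) : LpSeq p) = (lp.single p i (1:ℂ) : LpSeq p) := by
    rw [← lp.single_smul]
    congr 1
    rw [smul_eq_mul, inv_mul_cancel₀ hyi]
  rw [← h2]
  exact V.smul_mem _ h1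

lemma eq_top_of_singles (hp' : p ≠ ⊤) {V : Submodule ℂ (LpSeq p)}
    (hCl : IsClosed (V : Set (LpSeq p))) (hall : ∀ i, lp.single p i (1:ℂ) ∈ V) : V = ⊤ := by
  rw [Submodule.eq_top_iff']
  intro f
  have hsum := lp.hasSum_single hp' f
  refine hCl.mem_of_tendsto hsum (Filter.Eventually.of_forall fun s => ?_)
  refine Submodule.sum_mem _ fun i _ => ?_
  have : (lp.single p i (f i) : LpSeq p) = f i • (lp.single p i (1:ℂ) : LpSeq p) := by
    rw [← lp.single_smul, smul_eq_mul, mul_one]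
  rw [this]
  exact V.smul_mem _ (hall i)

lemma no_ideal_of_entries (hp' : p ≠ ⊤) (T : LpSeq p →L[ℂ] LpSeq p)
    (h : ∀ i j : ℕ, (T (lp.single p i 1)) j ≠ 0) :
    ¬ ∃ V : Submodule ℂ (LpSeq p), IsIdealLp V ∧ IsClosed (V : Set (LpSeq p)) ∧
      V ≠ ⊥ ∧ V ≠ ⊤ ∧ ∀ x ∈ V, T x ∈ V := by
  rintro ⟨V, hId, hCl, hBot, hTop, hInv⟩
  obtain ⟨y, hyV, hy0⟩ : ∃ y ∈ V, y ≠ 0 := by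
    by_contra hc
    push_neg at hc
    exact hBot ((Submodule.eq_bot_iff V).mpr hc)
  obtain ⟨i, hi⟩ : ∃ i, y i ≠ 0 := by
    by_contra hc
    push_neg at hc
    exact hy0 (lp.ext (funext fun n => hc n))
  have hei : lp.single p i 1 ∈ V := single_mem_of_mem hId hyV hi
  have hall : ∀ j, lp.single p j (1:ℂ) ∈ V := fun j =>
    single_mem_of_mem hId (hInv _ hei) (h i j)
  exact hTop (eq_top_of_singles hp' hCl hall)

/-- convex combination of operators. -/
def combo (p : ℝ≥0∞) [Fact (1 ≤ p)] (T S : LpSeq p →L[ℂ] LpSeq p) (ε : ℝ) :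
    LpSeq p →L[ℂ] LpSeq p :=
  ((1 - ε : ℝ) : ℂ) • T + (ε : ℂ) • S

lemma combo_coord (T S : LpSeq p →L[ℂ] LpSeq p) (ε : ℝ) (x : LpSeq p) (n : ℕ) :
    (combo p T S ε x) n = ((1 - ε : ℝ) : ℂ) * (T x) n + (ε : ℂ) * (S x) n := by
  rw [combo, ContinuousLinearMap.add_apply, ContinuousLinearMap.smul_apply,
    ContinuousLinearMap.smul_apply, lp.coeFn_add, Pi.add_apply, lp.coeFn_smul, lp.coeFn_smul,
    Pi.smul_apply, Pi.smul_apply, smul_eq_mul, smul_eq_mul]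

lemma combo_mem_P1 {T S : LpSeq p →L[ℂ] LpSeq p} (hT : T ∈ P1 p) (hS : S ∈ P1 p)
    {ε : ℝ} (hε0 : 0 ≤ ε) (hε1 : ε ≤ 1) : combo p T S ε ∈ P1 p := by
  constructor
  · intro x hx n
    rw [combo_coord]
    obtain ⟨h1, h2⟩ := hT.1 x hx n
    obtain ⟨h3, h4⟩ := hS.1 x hx n
    constructor
    · simp only [Complex.add_re, Complex.mul_re, Complex.ofReal_re, Complex.ofReal_im, h2, h4,
        zero_mul, mul_zero, sub_zero]
      have := mul_nonneg (by linarith : (0:ℝ) ≤ 1 - ε) h1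
      have := mul_nonneg hε0 h3
      linarith
    · simp only [Complex.add_im, Complex.mul_im, Complex.ofReal_re, Complex.ofReal_im, h2, h4,
        zero_mul, mul_zero, add_zero, zero_add]
  · have hnorm : ‖combo p T S ε‖ ≤ (1 - ε) * ‖T‖ + ε * ‖S‖ := by
      refine (norm_add_le _ _).trans (add_le_add ?_ ?_)
      · refine (ContinuousLinearMap.opNorm_smul_le _ _).trans ?_
        rw [Complex.norm_real, Real.norm_eq_abs,
          abs_of_nonneg (by linarith : (0:ℝ) ≤ 1 - ε)]
      · refine (ContinuousLinearMap.opNorm_smul_le _ _).trans ?_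
        rw [Complex.norm_real, Real.norm_eq_abs, abs_of_nonneg hε0]
    refine hnorm.trans ?_
    have h1 := hT.2
    have h2 := hS.2
    nlinarith [norm_nonneg T, norm_nonneg S]

lemma combo_entry_ne {T : LpSeq p →L[ℂ] LpSeq p} (hT : T ∈ P1 p) (i j : ℕ)
    {ε : ℝ} (hε0 : 0 < ε) (hε1 : ε ≤ 1) :
    (combo p T (rankOne p i j) ε (lp.single p i 1)) j ≠ 0 := by
  rw [combo_coord]
  have hS : (rankOne p i j (lp.single p i 1)) j = 1 := by
    rw [rankOne_coord, lp.single_apply_self, lp.single_apply_self, one_mul]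
  rw [hS, mul_one]
  obtain ⟨h1, h2⟩ := hT.1 _ (posVec_single i) j
  intro hc
  have hre := congrArg Complex.re hc
  simp only [Complex.add_re, Complex.mul_re, Complex.ofReal_re, Complex.ofReal_im, h2,
    zero_mul, mul_zero, sub_zero, Complex.zero_re] at hre
  nlinarith

lemma tendsto_combo (hp' : p ≠ ⊤) (i j : ℕ) (T₀ : ↥(P1 p)) :
    Filter.Tendsto
      (fun n : ℕ => combo p (T₀ : LpSeq p →L[ℂ] LpSeq p) (rankOne p i j) (1 / (n + 1)))
      Filter.atTop (nhds (T₀ : LpSeq p →L[ℂ] LpSeq p)) := by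
  have hposd : ∀ n : ℕ, (0:ℝ) ≤ 1 / (n + 1) := fun n => by positivity
  rw [tendsto_iff_norm_sub_tendsto_zero]
  have hb : ∀ n : ℕ,
      ‖combo p (T₀ : LpSeq p →L[ℂ] LpSeq p) (rankOne p i j) (1 / (n + 1))
        - (T₀ : LpSeq p →L[ℂ] LpSeq p)‖
      ≤ (1 / (n + 1) : ℝ) * ‖rankOne p i j - (T₀ : LpSeq p →L[ℂ] LpSeq p)‖ := by
    intro n
    have heq : combo p (T₀ : LpSeq p →L[ℂ] LpSeq p) (rankOne p i j) (1 / (n + 1))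
        - (T₀ : LpSeq p →L[ℂ] LpSeq p)
        = ((1 / (n + 1) : ℝ) : ℂ) • (rankOne p i j - (T₀ : LpSeq p →L[ℂ] LpSeq p)) := by
      rw [combo]
      push_cast
      module
    rw [heq]
    refine (ContinuousLinearMap.opNorm_smul_le _ _).trans ?_
    rw [Complex.norm_real, Real.norm_eq_abs, abs_of_nonneg (hposd n)]
  have hten : Filter.Tendsto (fun n : ℕ => (1 / (n + 1) : ℝ)
      * ‖rankOne p i j - (T₀ : LpSeq p →L[ℂ] LpSeq p)‖) Filter.atTop (nhds 0) := by
    have := tendsto_one_div_add_atTop_nhds_zero_nat.mul_const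
      ‖rankOne p i j - (T₀ : LpSeq p →L[ℂ] LpSeq p)‖
    simpa using this
  exact squeeze_zero (fun n => norm_nonneg _) hb hten

lemma residual_general (hp' : p ≠ ⊤)
    (t : TopologicalSpace (LpSeq p →L[ℂ] LpSeq p))
    (hle : (ContinuousLinearMap.topologicalSpace :
      TopologicalSpace (LpSeq p →L[ℂ] LpSeq p)) ≤ t)
    (hcont : ∀ i j : ℕ,
      @Continuous _ _ t _ (fun T : LpSeq p →L[ℂ] LpSeq p => (T (lp.single p i 1)) j)) :
    {T : ↥(P1 p) | ¬ ∃ V : Submodule ℂ (LpSeq p), IsIdealLp V ∧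
        IsClosed (V : Set (LpSeq p)) ∧ V ≠ ⊥ ∧ V ≠ ⊤ ∧
        ∀ x ∈ V, (T : LpSeq p →L[ℂ] LpSeq p) x ∈ V}
        ∈ @residual ↥(P1 p) (rtop (P1 p) t) := by
  letI τ : TopologicalSpace ↥(P1 p) := rtop (P1 p) t
  set G : ℕ × ℕ → Set ↥(P1 p) :=
    fun ij => {T : ↥(P1 p) |
      ((T : LpSeq p →L[ℂ] LpSeq p) (lp.single p ij.1 1)) ij.2 ≠ 0} with hGdef
  have hval : @Continuous _ _ τ t (Subtype.val : ↥(P1 p) → (LpSeq p →L[ℂ] LpSeq p)) :=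
    continuous_induced_dom
  have hopen : ∀ ij, IsOpen (G ij) := by
    intro ij
    have hc : @Continuous _ _ τ _
        (fun T : ↥(P1 p) => ((T : LpSeq p →L[ℂ] LpSeq p) (lp.single p ij.1 1)) ij.2) :=
      (hcont ij.1 ij.2).comp hval
    exact (isOpen_compl_singleton (x := (0:ℂ))).preimage hc
  have hdense : ∀ ij, Dense (G ij) := by
    intro ij T₀
    have hpos : ∀ n : ℕ, (0:ℝ) < 1 / (n + 1) := fun n => by positivity
    have hle1 : ∀ n : ℕ, (1:ℝ) / (n + 1) ≤ 1 := fun n => by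
      rw [div_le_one (by positivity)]
      have : (0:ℝ) ≤ (n:ℝ) := Nat.cast_nonneg n
      linarith
    set seq : ℕ → ↥(P1 p) := fun n =>
      ⟨combo p (T₀ : LpSeq p →L[ℂ] LpSeq p) (rankOne p ij.1 ij.2) (1 / (n + 1)),
        combo_mem_P1 T₀.2 (rankOne_mem_P1 hp' ij.1 ij.2) (hpos n).le (hle1 n)⟩ with hseq
    have hmem : ∀ n, seq n ∈ G ij := fun n =>
      combo_entry_ne T₀.2 ij.1 ij.2 (hpos n) (hle1 n)
    have htends : Filter.Tendsto (fun n => (seq n : LpSeq p →L[ℂ] LpSeq p)) Filter.atTop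
        (@nhds _ ContinuousLinearMap.topologicalSpace (T₀ : LpSeq p →L[ℂ] LpSeq p)) :=
      tendsto_combo hp' ij.1 ij.2 T₀
    have htendt : Tendsto (fun n => (seq n : LpSeq p →L[ℂ] LpSeq p)) atTop
        (@nhds _ t (T₀ : LpSeq p →L[ℂ] LpSeq p)) :=
      htends.mono_right (nhds_mono hle)
    have htendτ : Tendsto seq atTop (@nhds _ τ T₀) := by
      rw [show τ = TopologicalSpace.induced (Subtype.val : ↥(P1 p) → _) t from rfl,
        nhds_induced]
      exact Filter.tendsto_comap_iff.mpr htendt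
    exact mem_closure_of_tendsto htendτ (Filter.Eventually.of_forall hmem)
  have hres : ∀ ij, G ij ∈ @residual _ τ := fun ij =>
    residual_of_dense_open (hopen ij) (hdense ij)
  have hinter : (⋂ ij, G ij) ∈ @residual _ τ := countable_iInter_mem.mpr hres
  refine Filter.mem_of_superset hinter ?_
  intro T hT
  exact no_ideal_of_entries hp' _ (fun i j => Set.mem_iInter.mp hT (i, j))

lemma norm_le_wot : (ContinuousLinearMap.topologicalSpace :
    TopologicalSpace (LpSeq p →L[ℂ] LpSeq p)) ≤ wotOp p := by
  have hF : Continuous (fun T : LpSeq p →L[ℂ] LpSeq p =>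
      (fun q : LpSeq p × StrongDual ℂ (LpSeq p) => q.2 (T q.1))) := by
    refine continuous_pi fun q => ?_
    exact continuous_const.clm_apply (continuous_id.clm_apply continuous_const)
  exact continuous_iff_le_induced.mp hF

lemma wot_cont (i j : ℕ) :
    @Continuous _ _ (wotOp p) _
      (fun T : LpSeq p →L[ℂ] LpSeq p => (T (lp.single p i 1)) j) := by
  letI : TopologicalSpace (LpSeq p →L[ℂ] LpSeq p) := wotOp p
  have h1 : Continuous
      (fun T : LpSeq p →L[ℂ] LpSeq p =>
        (fun q : LpSeq p × StrongDual ℂ (LpSeq p) => q.2 (T q.1))) :=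
    continuous_induced_dom
  exact (continuous_apply
    ((lp.single p i 1 : LpSeq p), (coordCLM p j : StrongDual ℂ (LpSeq p)))).comp h1

lemma norm_le_sotStar :
    (ContinuousLinearMap.topologicalSpace :
      TopologicalSpace (LpSeq p →L[ℂ] LpSeq p)) ≤ sotStarDualOp p := by
  have hF : Continuous (fun T : LpSeq p →L[ℂ] LpSeq p =>
      (fun y : StrongDual ℂ (LpSeq p) => y.comp T)) := by
    refine continuous_pi fun y => ?_
    exact continuous_const.clm_comp continuous_id
  exact continuous_iff_le_induced.mp hF

lemma sotStar_cont (i j : ℕ) :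
    @Continuous _ _ (sotStarDualOp p) _
      (fun T : LpSeq p →L[ℂ] LpSeq p => (T (lp.single p i 1)) j) := by
  letI : TopologicalSpace (LpSeq p →L[ℂ] LpSeq p) := sotStarDualOp p
  have h1 : Continuous
      (fun T : LpSeq p →L[ℂ] LpSeq p =>
        (fun y : StrongDual ℂ (LpSeq p) => y.comp T)) :=
    continuous_induced_dom
  have h2 := (continuous_apply (coordCLM p j : StrongDual ℂ (LpSeq p))).comp h1
  have h3 : Continuous (fun y : StrongDual ℂ (LpSeq p) => y (lp.single p i 1)) :=
    continuous_id.clm_apply continuous_const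
  exact h3.comp h2

end NoIdealAux

/-- Let `p > 1` and `X = ℓ_p`.  The set of all `T ∈ 𝒫₁(X)` having no
non-trivial closed invariant ideal is comeager in `(𝒫₁(X), WOT)` and comeager in
`(𝒫₁(X), SOT_*)`. -/
theorem typical_positive_contraction_no_invariant_ideal
    (p : ℝ≥0∞) [Fact (1 ≤ p)] (hp : 1 < p) (hp' : p ≠ ⊤) :
    {T : ↥(P1 p) | ¬ ∃ V : Submodule ℂ (LpSeq p), IsIdealLp V ∧
        IsClosed (V : Set (LpSeq p)) ∧ V ≠ ⊥ ∧ V ≠ ⊤ ∧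
        ∀ x ∈ V, (T : LpSeq p →L[ℂ] LpSeq p) x ∈ V}
        ∈ @residual ↥(P1 p) (rtop (P1 p) (wotOp p)) ∧
    {T : ↥(P1 p) | ¬ ∃ V : Submodule ℂ (LpSeq p), IsIdealLp V ∧
        IsClosed (V : Set (LpSeq p)) ∧ V ≠ ⊥ ∧ V ≠ ⊤ ∧
        ∀ x ∈ V, (T : LpSeq p →L[ℂ] LpSeq p) x ∈ V}
        ∈ @residual ↥(P1 p) (rtop (P1 p) (sotStarDualOp p)) := by
  constructor
  · exact NoIdealAux.residual_general hp' (wotOp p) NoIdealAux.norm_le_wot NoIdealAux.wot_cont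
  · exact NoIdealAux.residual_general hp' (sotStarDualOp p) NoIdealAux.norm_le_sotStar
      NoIdealAux.sotStar_cont
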